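/- Every range-compatible additive group homomorphism F : Λ³(K) → K³ on the space of 3×3 alternating matrices over a field K is local: there exists X ∈ K³ such that F(A) = A·X for all alternating A ∈ M₃(K). -/

import Mathlib

open Matrix

private def g3 {K : Type*} [Field K] (a : Fin 3 → K) : Matrix (Fin 3) (Fin 3) K :=
  ![![0, -a 2, a 1], ![a 2, 0, -a 0], ![-a 1, a 0, 0]]

private lemma g3_alt {K : Type*} [Field K] (a : Fin 3 → K) :
    ∀ X : Fin 3 → K, X ⬝ᵥ (g3 a).mulVec X = 0 := by
  intro X
  simp [g3, Matrix.mulVec, dotProduct, Fin.sum_univ_three]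
  ring

private lemma g3_triple {K : Type*} [Field K] (a Y : Fin 3 → K) :
    a ⬝ᵥ (g3 a).mulVec Y = 0 := by
  simp [g3, Matrix.mulVec, dotProduct, Fin.sum_univ_three]
  ring

private lemma g3_add {K : Type*} [Field K] (a b : Fin 3 → K) :
    g3 (a + b) = g3 a + g3 b := by
  ext i j
  rw [Matrix.add_apply]
  fin_cases i <;> fin_cases j <;> simp [g3] <;> ring


/-- Every range-compatible additive map on the space of 3×3 alternating
matrices over a field is local. -/
theorem rangeCompatible_hom_on_alt3_is_local
    (K : Type*) [Field K]
    (F : Matrix (Fin 3) (Fin 3) K → (Fin 3 → K))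
    (hadd : ∀ A B : Matrix (Fin 3) (Fin 3) K,
      (∀ X : Fin 3 → K, X ⬝ᵥ A.mulVec X = 0) →
      (∀ X : Fin 3 → K, X ⬝ᵥ B.mulVec X = 0) →
      F (A + B) = F A + F B)
    (hrc : ∀ A : Matrix (Fin 3) (Fin 3) K,
      (∀ X : Fin 3 → K, X ⬝ᵥ A.mulVec X = 0) →
      ∃ Y : Fin 3 → K, A.mulVec Y = F A) :
    ∃ X : Fin 3 → K, ∀ A : Matrix (Fin 3) (Fin 3) K,
      (∀ Y : Fin 3 → K, Y ⬝ᵥ A.mulVec Y = 0) → F A = A.mulVec X := by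
  -- orthogonality
  have horth : ∀ a : Fin 3 → K, a ⬝ᵥ F (g3 a) = 0 := by
    intro a
    obtain ⟨Y, hY⟩ := hrc (g3 a) (g3_alt a)
    rw [← hY]; exact g3_triple a Y
  have hpol : ∀ a b : Fin 3 → K, a ⬝ᵥ F (g3 b) + b ⬝ᵥ F (g3 a) = 0 := by
    intro a b
    have h := horth (a + b)
    rw [g3_add, hadd _ _ (g3_alt a) (g3_alt b)] at h
    have ha := horth a
    have hb := horth b
    simp only [add_dotProduct, dotProduct_add, dotProduct, Fin.sum_univ_three, Pi.add_apply] at h ha hb ⊢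
    linear_combination h - ha - hb
  set E0 : Fin 3 → K := ![1,0,0] with hE0
  set E1 : Fin 3 → K := ![0,1,0] with hE1
  set E2 : Fin 3 → K := ![0,0,1] with hE2
  refine ⟨![-(F (g3 E1) 2), F (g3 E0) 2, -(F (g3 E0) 1)], ?_⟩
  intro A hA
  -- entry relations of A
  have h00 : A 0 0 = 0 := by
    have := hA E0; simpa [hE0, Matrix.mulVec, dotProduct, Fin.sum_univ_three] using this
  have h11 : A 1 1 = 0 := by
    have := hA E1; simpa [hE1, Matrix.mulVec, dotProduct, Fin.sum_univ_three] using this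
  have h22 : A 2 2 = 0 := by
    have := hA E2; simpa [hE2, Matrix.mulVec, dotProduct, Fin.sum_univ_three] using this
  have h01 : A 0 1 = -A 1 0 := by
    have := hA ![1,1,0]
    simp [Matrix.mulVec, dotProduct, Fin.sum_univ_three, h00, h11] at this
    linear_combination this
  have h02 : A 0 2 = -A 2 0 := by
    have := hA ![1,0,1]
    simp [Matrix.mulVec, dotProduct, Fin.sum_univ_three, h00, h22] at this
    linear_combination this
  have h12 : A 1 2 = -A 2 1 := by
    have := hA ![0,1,1]
    simp [Matrix.mulVec, dotProduct, Fin.sum_univ_three, h11, h22] at this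
    linear_combination this
  have hAg : A = g3 ![A 2 1, A 0 2, A 1 0] := by
    ext i j
    fin_cases i <;> fin_cases j <;>
      simp [g3, h00, h11, h22, h01, h02, h12]
  -- component formula
  have hcomp : ∀ v : Fin 3 → K, ∀ i : Fin 3,
      F (g3 v) i = -(v ⬝ᵥ F (g3 (Pi.single i 1))) := by
    intro v i
    have h := hpol (Pi.single i 1) v
    have : Pi.single i 1 ⬝ᵥ F (g3 v) = F (g3 v) i := by
      simp [single_dotProduct]
    linear_combination h - this
  have hs0 : (Pi.single (0:Fin 3) (1:K)) = E0 := by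
    funext j; fin_cases j <;> simp [hE0]
  have hs1 : (Pi.single (1:Fin 3) (1:K)) = E1 := by
    funext j; fin_cases j <;> simp [hE1]
  have hs2 : (Pi.single (2:Fin 3) (1:K)) = E2 := by
    funext j; fin_cases j <;> simp [hE2]
  have hc00 : F (g3 E0) 0 = 0 := by
    have := horth E0; simpa [hE0, dotProduct, Fin.sum_univ_three] using this
  have hc11 : F (g3 E1) 1 = 0 := by
    have := horth E1; simpa [hE1, dotProduct, Fin.sum_univ_three] using this
  have hc22 : F (g3 E2) 2 = 0 := by
    have := horth E2; simpa [hE2, dotProduct, Fin.sum_univ_three] using this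
  have hp01 : F (g3 E1) 0 + F (g3 E0) 1 = 0 := by
    have := hpol E0 E1; simpa [hE0, hE1, dotProduct, Fin.sum_univ_three] using this
  have hp02 : F (g3 E2) 0 + F (g3 E0) 2 = 0 := by
    have := hpol E0 E2; simpa [hE0, hE2, dotProduct, Fin.sum_univ_three] using this
  have hp12 : F (g3 E2) 1 + F (g3 E1) 2 = 0 := by
    have := hpol E1 E2; simpa [hE1, hE2, dotProduct, Fin.sum_univ_three] using this
  set c0 : Fin 3 → K := F (g3 E0) with hc0
  set c1 : Fin 3 → K := F (g3 E1) with hc1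
  set c2 : Fin 3 → K := F (g3 E2) with hc2
  have hb0 := hcomp ![A 2 1, A 0 2, A 1 0] 0
  have hb1 := hcomp ![A 2 1, A 0 2, A 1 0] 1
  have hb2 := hcomp ![A 2 1, A 0 2, A 1 0] 2
  rw [hs0, ← hc0] at hb0; rw [hs1, ← hc1] at hb1; rw [hs2, ← hc2] at hb2
  simp only [dotProduct, Fin.sum_univ_three, Matrix.cons_val_zero, Matrix.cons_val_one,
    Matrix.head_cons, Matrix.cons_val_two, Matrix.tail_cons] at hb0 hb1 hb2
  rw [hAg]
  have hm0 : F (g3 ![A 2 1, A 0 2, A 1 0]) 0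
      = ((g3 ![A 2 1, A 0 2, A 1 0]).mulVec ![-(c1 2), c0 2, -(c0 1)]) 0 := by
    rw [hb0]
    simp only [g3, Matrix.mulVec, dotProduct, Fin.sum_univ_three, Matrix.cons_val_zero,
      Matrix.cons_val_one, Matrix.head_cons, Matrix.cons_val_two, Matrix.tail_cons]
    linear_combination -A 2 1 * hc00
  have hm1 : F (g3 ![A 2 1, A 0 2, A 1 0]) 1
      = ((g3 ![A 2 1, A 0 2, A 1 0]).mulVec ![-(c1 2), c0 2, -(c0 1)]) 1 := by
    rw [hb1]
    simp only [g3, Matrix.mulVec, dotProduct, Fin.sum_univ_three, Matrix.cons_val_zero,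
      Matrix.cons_val_one, Matrix.head_cons, Matrix.cons_val_two, Matrix.tail_cons]
    linear_combination -A 2 1 * hp01 - A 0 2 * hc11
  have hm2 : F (g3 ![A 2 1, A 0 2, A 1 0]) 2
      = ((g3 ![A 2 1, A 0 2, A 1 0]).mulVec ![-(c1 2), c0 2, -(c0 1)]) 2 := by
    rw [hb2]
    simp only [g3, Matrix.mulVec, dotProduct, Fin.sum_univ_three, Matrix.cons_val_zero,
      Matrix.cons_val_one, Matrix.head_cons, Matrix.cons_val_two, Matrix.tail_cons]
    linear_combination -A 2 1 * hp02 - A 0 2 * hp12 - A 1 0 * hc22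
  funext i
  fin_cases i
  exacts [hm0, hm1, hm2]
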